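/- Let f : ℤ → ℂ be a quasi-polynomial (i.e., there exist N ≥ 1 and polynomials Q₀,…,Q_{N−1} ∈ ℂ[x] with f(n) = Q_i(n) whenever n ≡ i mod N). Then, as formal identities of rational functions, ∑_{i<0} f(i) t^i = − ∑_{i≥0} f(i) t^i; i.e., the generating function of f over nonnegative integers, which is a rational function of t, when expanded as a Laurent series at infinity, gives the negative of the values of f at negative integers. -/

import Mathlib

open Polynomial Finset

noncomputable section QPaux

/-- Strengthened statement carried through the induction. -/
def QPGood (f : ℤ → ℂ) : Prop :=
  ∃ (p q : Polynomial ℂ) (D : ℕ), q ≠ 0 ∧ p.natDegree ≤ D ∧ q.natDegree ≤ D ∧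
    (q : PowerSeries ℂ) * PowerSeries.mk (fun n : ℕ => f n) = (p : PowerSeries ℂ) ∧
    ((q.reflect D : Polynomial ℂ) : PowerSeries ℂ) *
        (PowerSeries.X * PowerSeries.mk (fun n : ℕ => f (-1 - n))) =
      -(((p.reflect D : Polynomial ℂ) : PowerSeries ℂ))

lemma qp_reflect_sum (N : ℕ) (s : Finset ℕ) (g : ℕ → ℂ[X]) :
    reflect N (∑ i ∈ s, g i) = ∑ i ∈ s, reflect N (g i) := by
  classical
  induction s using Finset.induction_on with
  | empty => simp [reflect_zero]
  | insert _ _ h ih => rw [Finset.sum_insert h, Finset.sum_insert h, reflect_add, ih]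

lemma qp_c_natDegree (N : ℕ) (a : ℕ → ℂ) :
    (∑ i ∈ range N, C (a i) * Polynomial.X ^ i : ℂ[X]).natDegree ≤ N := by
  refine natDegree_sum_le_of_forall_le _ _ fun i hi => ?_
  calc (C (a i) * Polynomial.X ^ i).natDegree
      ≤ (C (a i)).natDegree + (Polynomial.X ^ i : ℂ[X]).natDegree := natDegree_mul_le
    _ ≤ i := by simp
    _ ≤ N := (mem_range.mp hi).le

lemma qp_reflect_c (N : ℕ) (a : ℕ → ℂ) :
    (∑ i ∈ range N, C (a i) * Polynomial.X ^ i : ℂ[X]).reflect N =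
      Polynomial.X * ∑ i ∈ range N, C (a (N - 1 - i)) * Polynomial.X ^ i := by
  rw [qp_reflect_sum, Finset.mul_sum,
    ← Finset.sum_range_reflect (fun i => Polynomial.X * (C (a (N - 1 - i)) * Polynomial.X ^ i)) N]
  refine Finset.sum_congr rfl fun i hi => ?_
  have hi' := mem_range.mp hi
  rw [reflect_C_mul_X_pow, revAt_le hi'.le]
  have h1 : N - 1 - (N - 1 - i) = i := by omega
  have h2 : N - i = (N - 1 - i) + 1 := by omega
  rw [h1, h2, pow_succ]
  ring

lemma qp_coeff_c (N n : ℕ) (a : ℕ → ℂ) :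
    (∑ i ∈ range N, C (a i) * Polynomial.X ^ i : ℂ[X]).coeff n =
      if n < N then a n else 0 := by
  rw [finset_sum_coeff]
  simp only [coeff_C_mul, coeff_X_pow, mul_ite, mul_one, mul_zero, Finset.sum_ite_eq,
    mem_range]

/-- positive-side series relation -/
lemma qp_F1 (f : ℤ → ℂ) (N : ℕ) :
    ((1 - Polynomial.X ^ N : ℂ[X]) : PowerSeries ℂ) * PowerSeries.mk (fun n : ℕ => f n) =
      PowerSeries.mk (fun n : ℕ => f n - f (n - N)) +
        ((∑ i ∈ range N, C (f ((i : ℤ) - N)) * Polynomial.X ^ i : ℂ[X]) : PowerSeries ℂ) := by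
  ext n
  rw [Polynomial.coe_sub, Polynomial.coe_one, Polynomial.coe_pow, Polynomial.coe_X,
    sub_mul, one_mul, map_sub, map_add, PowerSeries.coeff_X_pow_mul',
    Polynomial.coeff_coe, qp_coeff_c]
  simp only [PowerSeries.coeff_mk]
  split_ifs with h h2 h2
  · omega
  · have : ((n - N : ℕ) : ℤ) = (n : ℤ) - N := by omega
    rw [this]; ring
  · ring
  · omega

/-- negative-side series relation -/
lemma qp_F2 (f : ℤ → ℂ) (N : ℕ) :
    PowerSeries.mk (fun n : ℕ => f (-1 - n)) =
      (PowerSeries.X : PowerSeries ℂ) ^ N * PowerSeries.mk (fun n : ℕ => f (-1 - n - N)) +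
        ((∑ i ∈ range N, C (f (-1 - (i : ℤ))) * Polynomial.X ^ i : ℂ[X]) : PowerSeries ℂ) := by
  ext n
  rw [map_add, PowerSeries.coeff_X_pow_mul', Polynomial.coeff_coe, qp_coeff_c]
  simp only [PowerSeries.coeff_mk]
  split_ifs with h h2 h2
  · omega
  · have : (-1 : ℤ) - ((n - N : ℕ) : ℤ) - N = -1 - n := by omega
    rw [this, add_zero]
  · simp
  · omega

lemma qp_mk_sub (x y : ℕ → ℂ) :
    PowerSeries.mk (fun n => x n - y n) = PowerSeries.mk x - PowerSeries.mk y := by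
  ext n; simp

lemma qp_reflect_one_sub_X_pow (N : ℕ) :
    (1 - Polynomial.X ^ N : ℂ[X]).reflect N = Polynomial.X ^ N - 1 := by
  have h : (1 - Polynomial.X ^ N : ℂ[X]) = C 1 * Polynomial.X ^ 0 + C (-1) * Polynomial.X ^ N := by
    simp [sub_eq_add_neg]
  rw [h, reflect_add, reflect_C_mul_X_pow, reflect_C_mul_X_pow, revAt_le (Nat.zero_le N),
    revAt_le le_rfl]
  simp [sub_eq_add_neg, add_comm]

lemma qp_natDegree_one_sub_X_pow (N : ℕ) :
    (1 - Polynomial.X ^ N : ℂ[X]).natDegree ≤ N :=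
  le_trans (natDegree_sub_le _ _) (by simp)

/-- The induction step: if the statement holds for the `N`-difference of `f`, it holds for `f`. -/
lemma qp_step (f : ℤ → ℂ) (N : ℕ) (hN : 0 < N)
    (h : QPGood (fun n => f n - f (n - N))) : QPGood f := by
  obtain ⟨p', q', D', hq'0, hpD, hqD, hpos, hneg⟩ := h
  set c : ℂ[X] := ∑ i ∈ range N, C (f ((i : ℤ) - N)) * Polynomial.X ^ i with hc
  set c' : ℂ[X] := ∑ i ∈ range N, C (f (-1 - (i : ℤ))) * Polynomial.X ^ i with hc'
  have hrc : c.reflect N = Polynomial.X * c' := by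
    rw [hc, qp_reflect_c]
    rw [hc']
    congr 1
    refine Finset.sum_congr rfl fun i hi => ?_
    have hi' := mem_range.mp hi
    have : ((N - 1 - i : ℕ) : ℤ) - N = -1 - i := by omega
    rw [this]
  refine ⟨p' + q' * c, q' * (1 - Polynomial.X ^ N), D' + N, ?_, ?_, ?_, ?_, ?_⟩
  · refine mul_ne_zero hq'0 ?_
    intro hX
    have := congrArg (fun r : ℂ[X] => r.coeff N) hX
    simp [Polynomial.coeff_one, hN.ne'] at this
  · refine le_trans (natDegree_add_le _ _) (max_le (le_trans hpD (by omega)) ?_)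
    refine le_trans natDegree_mul_le ?_
    have h1 : (c : ℂ[X]).natDegree ≤ N := qp_c_natDegree N _
    omega
  · refine le_trans natDegree_mul_le ?_
    have h1 := qp_natDegree_one_sub_X_pow N
    omega
  · -- positive side
    rw [Polynomial.coe_mul, mul_assoc, qp_F1 f N, Polynomial.coe_add, Polynomial.coe_mul]
    rw [mul_add, hpos]
  · -- negative side
    have hrq : (q' * (1 - Polynomial.X ^ N)).reflect (D' + N) =
        q'.reflect D' * (Polynomial.X ^ N - 1) := by
      rw [reflect_mul q' _ hqD (qp_natDegree_one_sub_X_pow N), qp_reflect_one_sub_X_pow]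
    have hshift : p'.reflect (D' + N) = p'.reflect D' * Polynomial.X ^ N := by
      conv_lhs => rw [← mul_one p']
      rw [reflect_mul p' 1 hpD (by simp : (1 : ℂ[X]).natDegree ≤ N), reflect_one]
    have hrp : (p' + q' * c).reflect (D' + N) =
        p'.reflect D' * Polynomial.X ^ N + q'.reflect D' * (Polynomial.X * c') := by
      rw [reflect_add, reflect_mul q' c hqD (qp_c_natDegree N _), hrc, hshift]
    rw [hrq, hrp]
    -- now a pure power-series computation
    have hB := qp_F2 f N
    set B : PowerSeries ℂ := PowerSeries.mk (fun n : ℕ => f (-1 - n)) with hBdef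
    set B' : PowerSeries ℂ := PowerSeries.mk (fun n : ℕ => f (-1 - n - N)) with hB'def
    have hgneg : PowerSeries.mk (fun n : ℕ => (fun m : ℤ => f m - f (m - N)) (-1 - n)) =
        B - B' := by
      rw [hBdef, hB'def, ← qp_mk_sub]
    rw [hgneg] at hneg
    push_cast [Polynomial.coe_mul, Polynomial.coe_add, Polynomial.coe_sub, Polynomial.coe_pow,
      Polynomial.coe_one, Polynomial.coe_X]
    linear_combination (-((q'.reflect D' : ℂ[X]) : PowerSeries ℂ) * PowerSeries.X) * hB +
      ((PowerSeries.X : PowerSeries ℂ) ^ N) * hneg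


lemma qp_lt_succ {x : WithBot ℕ} {d : ℕ} (h : x < ((d + 1 : ℕ) : WithBot ℕ)) :
    x ≤ (d : WithBot ℕ) := by
  cases x with
  | bot => exact bot_le
  | coe m =>
    have h2 : m < d + 1 := by
      simpa [Nat.cast_withBot, ← WithBot.coe_one, ← WithBot.coe_add, WithBot.coe_lt_coe] using h
    simpa [Nat.cast_withBot] using Nat.lt_succ_iff.mp h2

lemma qp_main (d : ℕ) : ∀ (f : ℤ → ℂ) (N : ℕ), 0 < N →
    ∀ Q : ℕ → Polynomial ℂ, (∀ n : ℤ, f n = (Q (n % (N : ℤ)).toNat).eval (n : ℂ)) →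
    (∀ i, i < N → (Q i).degree < (d : WithBot ℕ)) → QPGood f := by
  induction d with
  | zero =>
    intro f N hN Q hQ hdeg
    have hf0 : ∀ n : ℤ, f n = 0 := by
      intro n
      have h1 : (0 : ℤ) ≤ n % N := Int.emod_nonneg n (by exact_mod_cast hN.ne')
      have h2 : n % N < N := Int.emod_lt_of_pos n (by exact_mod_cast hN)
      have h3 : (n % (N : ℤ)).toNat < N := by omega
      have h4 : (Q (n % (N : ℤ)).toNat).degree < ((0 : ℕ) : WithBot ℕ) := hdeg _ h3
      have h5 : Q (n % (N : ℤ)).toNat = 0 := by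
        rw [← Polynomial.degree_eq_bot]
        exact Nat.WithBot.lt_zero_iff.mp (by exact_mod_cast h4)
      rw [hQ n, h5, Polynomial.eval_zero]
    refine ⟨0, 1, 0, one_ne_zero, by simp, by simp, ?_, ?_⟩
    · have : PowerSeries.mk (fun n : ℕ => f n) = 0 := by
        ext n; simp [hf0]
      rw [this]
      simp
    · have : PowerSeries.mk (fun n : ℕ => f (-1 - n)) = 0 := by
        ext n; simp [hf0]
      rw [this]
      simp
  | succ d ih =>
    intro f N hN Q hQ hdeg
    apply qp_step f N hN
    refine ih _ N hN (fun i => Q i - (Q i).comp (Polynomial.X - C (N : ℂ))) ?_ ?_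
    · intro n
      have hmod : (n - N) % (N : ℤ) = n % N := (Int.emod_eq_sub_self_emod).symm
      have h1 := hQ n
      have h2 := hQ (n - N)
      rw [hmod] at h2
      push_cast at h2
      simp only [eval_sub, eval_comp, eval_sub, eval_X, eval_C]
      rw [← h1, ← h2]
    · intro i hi
      set P := Q i with hP
      have hPd : P.degree < ((d + 1 : ℕ) : WithBot ℕ) := hdeg i hi
      show (P - P.comp (Polynomial.X - C (N : ℂ))).degree < (d : WithBot ℕ)
      by_cases hP0 : P = 0
      · rw [hP0]
        simp only [Polynomial.zero_comp, sub_zero, Polynomial.degree_zero]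
        simpa [Nat.cast_withBot] using WithBot.bot_lt_coe d
      · have hmonic : (Polynomial.X - C ((N : ℂ)) : ℂ[X]).Monic := monic_X_sub_C _
        have hnd1 : (Polynomial.X - C ((N : ℂ)) : ℂ[X]).natDegree = 1 := natDegree_X_sub_C _
        have hlc : (P.comp (Polynomial.X - C (N : ℂ))).leadingCoeff = P.leadingCoeff := by
          rw [Polynomial.leadingCoeff_comp (by rw [hnd1]; exact one_ne_zero)]
          rw [hmonic.leadingCoeff, one_pow, mul_one]
        have hcomp0 : P.comp (Polynomial.X - C (N : ℂ)) ≠ 0 := by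
          intro hzero
          apply hP0
          rw [← Polynomial.leadingCoeff_eq_zero, ← hlc, hzero, Polynomial.leadingCoeff_zero]
        have hdegeq : P.degree = (P.comp (Polynomial.X - C (N : ℂ))).degree := by
          rw [Polynomial.degree_eq_natDegree hP0, Polynomial.degree_eq_natDegree hcomp0,
            Polynomial.natDegree_comp, hnd1, mul_one]
        have hsub := Polynomial.degree_sub_lt hdegeq hP0 hlc.symm
        exact lt_of_lt_of_le hsub (qp_lt_succ hPd)

end QPaux

/-- If `f : ℤ → ℂ` is a quasi-polynomial, then, as an identity of rational
functions, `∑_{i<0} f(i) t^i = − ∑_{i≥0} f(i) t^i`.  This is encoded as: there are polynomials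
`p, q` with `q ≠ 0` such that `q(t)·∑_{n≥0} f(n) tⁿ = p(t)` (so `G₊ = p/q`), and, writing the
negative-index part in the variable `u = 1/t` as `u·B(u)` with `B(u) = ∑_{n≥0} f(−1−n) uⁿ`,
the reflected identity `q*(u)·u·B(u) = −p*(u)` holds, where `r* = reflect D r` denotes
`u^D·r(1/u)`; this says exactly `G₋(t) = −p(t)/q(t)` as rational functions. -/
theorem quasiPolynomial_laurent_reciprocity (f : ℤ → ℂ)
    (hf : ∃ N : ℕ, 0 < N ∧ ∃ Q : ℕ → Polynomial ℂ,
      ∀ n : ℤ, f n = (Q (n % (N : ℤ)).toNat).eval (n : ℂ)) :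
    ∃ (p q : Polynomial ℂ) (D : ℕ), q ≠ 0 ∧
      (q : PowerSeries ℂ) * PowerSeries.mk (fun n : ℕ => f n) = (p : PowerSeries ℂ) ∧
      ((q.reflect D : Polynomial ℂ) : PowerSeries ℂ) *
          (PowerSeries.X * PowerSeries.mk (fun n : ℕ => f (-1 - n))) =
        -(((p.reflect D : Polynomial ℂ) : PowerSeries ℂ)) := by
  obtain ⟨N, hN, Q, hQ⟩ := hf
  set d : ℕ := ((Finset.range N).sup fun i => (Q i).natDegree) + 1 with hd
  have hgood : QPGood f := by
    refine qp_main d f N hN Q hQ fun i hi => ?_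
    have h1 : (Q i).degree ≤ ((Q i).natDegree : WithBot ℕ) := Polynomial.degree_le_natDegree
    have h2 : (Q i).natDegree ≤ (Finset.range N).sup fun i => (Q i).natDegree :=
      Finset.le_sup (f := fun i => (Q i).natDegree) (Finset.mem_range.mpr hi)
    refine lt_of_le_of_lt h1 ?_
    have h3 : (Q i).natDegree < d := by omega
    simpa [Nat.cast_withBot, WithBot.coe_lt_coe] using h3
  obtain ⟨p, q, D, hq0, _, _, hpos, hneg⟩ := hgood
  exact ⟨p, q, D, hq0, hpos, hneg⟩
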